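/- For every integer n ≥ 2 and every r ∈ [0, π), one has cos(r) · ∫₀^r sin^{n−1}(s) ds ≤ sin^n(r)/n. Consequently, for 0 < p ≤ n/(2n−2), the function k(r) = I₁′(r)² − 2p I₁(r) I₁″(r) is nonnegative on [0, π), where I₁(r) = n ω_n α₁ ∫₀^r sin^{n−1}(s) ds with any constants ω_n, α₁ > 0; hence l ↦ l^{1/p} G₁(l)^{−2} is nondecreasing, where G₁(l) = I₁′(I₁^{−1}(l)). -/

import Mathlib

open Real Set

noncomputable section

/-- `I₁(r) = n ωₙ α₁ ∫₀^r sin^{n-1}(s) ds`. -/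
def Ione (n : ℕ) (ωn α₁ r : ℝ) : ℝ :=
  n * ωn * α₁ * ∫ s in (0 : ℝ)..r, Real.sin s ^ (n - 1)

/-- The inverse function of `I₁`. -/
def IoneInv (n : ℕ) (ωn α₁ l : ℝ) : ℝ := sInf {r : ℝ | 0 ≤ r ∧ l ≤ Ione n ωn α₁ r}

/-- `G₁ = I₁' ∘ I₁⁻¹`, defined on `[0, I₁(π))`. -/
def Gone (n : ℕ) (ωn α₁ l : ℝ) : ℝ := deriv (Ione n ωn α₁) (IoneInv n ωn α₁ l)

def J (n : ℕ) (r : ℝ) : ℝ := ∫ s in (0:ℝ)..r, Real.sin s ^ (n-1)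

lemma J_hasDerivAt (n : ℕ) (r : ℝ) : HasDerivAt (J n) (Real.sin r ^ (n-1)) r :=
  ((Real.continuous_sin.pow (n-1)).integral_hasStrictDerivAt 0 r).hasDerivAt

lemma J_nonneg (n : ℕ) {r : ℝ} (h0 : 0 ≤ r) (hπ : r ≤ π) : 0 ≤ J n r := by
  apply intervalIntegral.integral_nonneg h0
  intro s hs
  exact pow_nonneg (Real.sin_nonneg_of_nonneg_of_le_pi hs.1 (hs.2.trans hπ)) _

lemma J_pos (n : ℕ) {r : ℝ} (h0 : 0 < r) (hπ : r ≤ π) : 0 < J n r := by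
  apply intervalIntegral.intervalIntegral_pos_of_pos_on
    ((Real.continuous_sin.pow (n-1)).intervalIntegrable 0 r)
  · intro s hs
    exact pow_pos (Real.sin_pos_of_pos_of_lt_pi hs.1 (hs.2.trans_le hπ)) _
  · exact h0

lemma F_hasDerivAt (n : ℕ) (hn : 2 ≤ n) (r : ℝ) :
    HasDerivAt (fun r => Real.sin r ^ n / n - Real.cos r * J n r)
      (Real.sin r * J n r) r := by
  have h1 : HasDerivAt (fun r => Real.sin r ^ n / n)
      ((n * Real.sin r ^ (n-1) * Real.cos r) / n) r :=
    ((Real.hasDerivAt_sin r).pow n).div_const n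
  have h2 : HasDerivAt (fun r => Real.cos r * J n r)
      (-Real.sin r * J n r + Real.cos r * Real.sin r ^ (n-1)) r :=
    (Real.hasDerivAt_cos r).mul (J_hasDerivAt n r)
  have := h1.sub h2
  refine this.congr_deriv ?_
  have hn0 : (n : ℝ) ≠ 0 := by positivity
  field_simp
  ring

lemma part1 (n : ℕ) (hn : 2 ≤ n) {r : ℝ} (h0 : 0 ≤ r) (hπ : r ≤ π) :
    Real.cos r * J n r ≤ Real.sin r ^ n / n := by
  set F : ℝ → ℝ := fun r => Real.sin r ^ n / n - Real.cos r * J n r with hF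
  have hmono : MonotoneOn F (Icc 0 π) := by
    apply monotoneOn_of_deriv_nonneg (convex_Icc 0 π)
    · have : Continuous F := by
        apply Continuous.sub (by continuity)
        exact Real.continuous_cos.mul (intervalIntegral.continuous_primitive
          (fun a b => (Real.continuous_sin.pow (n-1)).intervalIntegrable a b) 0)
      exact this.continuousOn
    · intro x hx
      exact (F_hasDerivAt n hn x).differentiableAt.differentiableWithinAt
    · intro x hx
      rw [interior_Icc] at hx
      rw [(F_hasDerivAt n hn x).deriv]
      exact mul_nonneg (Real.sin_nonneg_of_nonneg_of_le_pi hx.1.le hx.2.le)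
        (J_nonneg n hx.1.le hx.2.le)
  have h := hmono (by simp [Real.pi_nonneg] : (0:ℝ) ∈ Icc 0 π) ⟨h0, hπ⟩ h0
  have hF0 : F 0 = 0 := by
    simp [hF, J, zero_pow (by omega : n ≠ 0)]
  rw [hF0] at h
  have : F r = Real.sin r ^ n / n - Real.cos r * J n r := rfl
  linarith [h, this ▸ h]

lemma key (n : ℕ) (hn : 2 ≤ n) {p : ℝ} (hp : 0 < p) (hp' : p ≤ (n:ℝ) / (2*n-2))
    {r : ℝ} (h0 : 0 ≤ r) (hπ : r ≤ π) :
    2 * p * ((n-1 : ℕ) : ℝ) * (Real.sin r ^ (n-2) * Real.cos r * J n r)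
      ≤ (Real.sin r ^ (n-1))^2 := by
  have hs : 0 ≤ Real.sin r := Real.sin_nonneg_of_nonneg_of_le_pi h0 hπ
  have hs2 : 0 ≤ Real.sin r ^ (n-2) := pow_nonneg hs _
  have hJ : 0 ≤ J n r := J_nonneg n h0 hπ
  have hcast : ((n-1 : ℕ) : ℝ) = (n:ℝ) - 1 := by
    push_cast [Nat.cast_sub (by omega : 1 ≤ n)]; ring
  have hcoef : 0 ≤ 2 * p * ((n-1 : ℕ) : ℝ) := by
    rw [hcast]
    have : (2:ℝ) ≤ n := by exact_mod_cast hn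
    nlinarith
  have hd : (0:ℝ) < 2*(n:ℝ)-2 := by
    have : (2:ℝ) ≤ n := by exact_mod_cast hn
    linarith
  have hcoefn : 2 * p * ((n-1 : ℕ) : ℝ) ≤ (n:ℝ) := by
    rw [le_div_iff₀ hd] at hp'
    rw [hcast]; nlinarith
  have hpow : (Real.sin r ^ (n-1))^2 = Real.sin r ^ (n-2) * Real.sin r ^ n := by
    rw [← pow_mul, ← pow_add]; congr 1; omega
  rcases le_or_gt (Real.cos r) 0 with hc | hc
  · have h1 : Real.sin r ^ (n-2) * Real.cos r ≤ 0 :=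
      mul_nonpos_of_nonneg_of_nonpos hs2 hc
    have h2 : Real.sin r ^ (n-2) * Real.cos r * J n r ≤ 0 :=
      mul_nonpos_of_nonpos_of_nonneg h1 hJ
    calc 2 * p * ((n-1 : ℕ) : ℝ) * (Real.sin r ^ (n-2) * Real.cos r * J n r) ≤ 0 :=
          mul_nonpos_of_nonneg_of_nonpos hcoef h2
      _ ≤ (Real.sin r ^ (n-1))^2 := sq_nonneg _
  · have hcJ : Real.cos r * J n r ≤ Real.sin r ^ n / n := part1 n hn h0 hπ
    have h1 : Real.sin r ^ (n-2) * (Real.cos r * J n r)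
        ≤ Real.sin r ^ (n-2) * (Real.sin r ^ n / n) :=
      mul_le_mul_of_nonneg_left hcJ hs2
    have h2 : 0 ≤ Real.sin r ^ (n-2) * (Real.cos r * J n r) :=
      mul_nonneg hs2 (mul_nonneg hc.le hJ)
    have hn0 : (0:ℝ) < (n:ℝ) := by positivity
    calc 2 * p * ((n-1 : ℕ) : ℝ) * (Real.sin r ^ (n-2) * Real.cos r * J n r)
        = 2 * p * ((n-1 : ℕ) : ℝ) * (Real.sin r ^ (n-2) * (Real.cos r * J n r)) := by ring
      _ ≤ (n:ℝ) * (Real.sin r ^ (n-2) * (Real.cos r * J n r)) :=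
          mul_le_mul_of_nonneg_right hcoefn h2
      _ ≤ (n:ℝ) * (Real.sin r ^ (n-2) * (Real.sin r ^ n / n)) :=
          mul_le_mul_of_nonneg_left h1 hn0.le
      _ = (Real.sin r ^ (n-1))^2 := by rw [hpow]; field_simp

lemma Ione_eq (n : ℕ) (ωn α₁ : ℝ) : Ione n ωn α₁ = fun r => (n:ℝ) * ωn * α₁ * J n r := rfl

lemma Ione_hasDerivAt (n : ℕ) (ωn α₁ r : ℝ) :
    HasDerivAt (Ione n ωn α₁) ((n:ℝ) * ωn * α₁ * Real.sin r ^ (n-1)) r :=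
  (J_hasDerivAt n r).const_mul _

lemma deriv_Ione (n : ℕ) (ωn α₁ : ℝ) :
    deriv (Ione n ωn α₁) = fun r => (n:ℝ) * ωn * α₁ * Real.sin r ^ (n-1) :=
  funext fun r => (Ione_hasDerivAt n ωn α₁ r).deriv

lemma deriv2_Ione (n : ℕ) (ωn α₁ r : ℝ) :
    deriv (deriv (Ione n ωn α₁)) r
      = (n:ℝ) * ωn * α₁ * (((n-1 : ℕ):ℝ) * Real.sin r ^ (n-2) * Real.cos r) := by
  rw [deriv_Ione]
  exact (((Real.hasDerivAt_sin r).pow (n-1)).const_mul _).deriv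

section Inv
variable {n : ℕ} (hn : 2 ≤ n) {ωn α₁ : ℝ} (hω : 0 < ωn) (hα : 0 < α₁)

include hn hω hα in
lemma hC_pos : (0:ℝ) < (n:ℝ) * ωn * α₁ := by
  have : (0:ℝ) < (n:ℝ) := by exact_mod_cast (by omega : 0 < n)
  positivity

lemma Ione_zero : Ione n ωn α₁ 0 = 0 := by
  simp [Ione]

lemma Ione_cont : Continuous (Ione n ωn α₁) := by
  rw [Ione_eq]
  exact continuous_const.mul (intervalIntegral.continuous_primitive
    (fun a b => (Real.continuous_sin.pow (n-1)).intervalIntegrable a b) 0)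

include hn hω hα in
lemma Ione_strictMono : StrictMonoOn (Ione n ωn α₁) (Icc 0 π) := by
  apply strictMonoOn_of_deriv_pos (convex_Icc 0 π) Ione_cont.continuousOn
  intro x hx
  rw [interior_Icc] at hx
  rw [deriv_Ione]
  have hn0 : (0:ℝ) < (n:ℝ) := by positivity
  have := Real.sin_pos_of_pos_of_lt_pi hx.1 hx.2
  positivity

include hn hω hα in
lemma IoneInv_spec {l : ℝ} (hl : l ∈ Ico 0 (Ione n ωn α₁ π)) :
    IoneInv n ωn α₁ l ∈ Ico 0 π ∧ Ione n ωn α₁ (IoneInv n ωn α₁ l) = l := by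
  obtain ⟨hl0, hlπ⟩ := hl
  have hivt : l ∈ Ione n ωn α₁ '' Icc 0 π := by
    apply intermediate_value_Icc Real.pi_nonneg Ione_cont.continuousOn
    rw [Ione_zero]
    exact ⟨hl0, hlπ.le⟩
  obtain ⟨r₀, hr₀, hr₀l⟩ := hivt
  have hr₀π : r₀ < π := by
    rcases lt_or_eq_of_le hr₀.2 with h | h
    · exact h
    · exfalso; rw [h] at hr₀l; rw [hr₀l] at hlπ; exact lt_irrefl _ hlπ
  have hlb : ∀ r ∈ {r : ℝ | 0 ≤ r ∧ l ≤ Ione n ωn α₁ r}, r₀ ≤ r := by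
    rintro r ⟨hr0, hrl⟩
    by_contra hcon
    push_neg at hcon
    have hrIcc : r ∈ Icc 0 π := ⟨hr0, hcon.le.trans hr₀.2⟩
    have := Ione_strictMono hn hω hα hrIcc hr₀ hcon
    rw [hr₀l] at this
    exact absurd hrl (not_le.mpr this)
  have hmem : r₀ ∈ {r : ℝ | 0 ≤ r ∧ l ≤ Ione n ωn α₁ r} := ⟨hr₀.1, hr₀l.ge⟩
  have heq : IoneInv n ωn α₁ l = r₀ := by
    apply le_antisymm
    · exact csInf_le ⟨r₀, hlb⟩ hmem
    · exact le_csInf ⟨r₀, hmem⟩ hlb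
  rw [heq]
  exact ⟨⟨hr₀.1, hr₀π⟩, hr₀l⟩

end Inv

section Phi
variable {n : ℕ} (hn : 2 ≤ n) {ωn α₁ : ℝ} (hω : 0 < ωn) (hα : 0 < α₁)
  {p : ℝ} (hp : 0 < p) (hp' : p ≤ (n:ℝ) / (2*n-2))

include hn hω hα hp hp' in
lemma phi_deriv {x : ℝ} (hx : x ∈ Ioo 0 π) :
    HasDerivAt (fun r => Ione n ωn α₁ r ^ (1/p)
        * ((((n:ℝ) * ωn * α₁ * Real.sin r ^ (n-1))⁻¹))^2)
      ((Ione n ωn α₁ x ^ (1/p - 1)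
          * (((n:ℝ) * ωn * α₁ * Real.sin x ^ (n-1))⁻¹)^3 * ((n:ℝ) * ωn * α₁)^2)
        * ((1/p) * (Real.sin x ^ (n-1))^2
            - 2 * ((n-1:ℕ):ℝ) * (Real.sin x ^ (n-2) * Real.cos x * J n x))) x := by
  set C : ℝ := (n:ℝ) * ωn * α₁ with hCdef
  have hC : 0 < C := hC_pos hn hω hα
  have hsin : 0 < Real.sin x := Real.sin_pos_of_pos_of_lt_pi hx.1 hx.2
  have hs : 0 < Real.sin x ^ (n-1) := pow_pos hsin _
  have hCs : 0 < C * Real.sin x ^ (n-1) := mul_pos hC hs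
  have hJ : 0 < J n x := J_pos n hx.1 hx.2.le
  have hI : 0 < Ione n ωn α₁ x := mul_pos hC hJ
  have h1 : HasDerivAt (fun r => Ione n ωn α₁ r ^ (1/p))
      ((1/p) * Ione n ωn α₁ x ^ (1/p - 1) * (C * Real.sin x ^ (n-1))) x := by
    have := (Ione_hasDerivAt n ωn α₁ x).rpow_const (p := 1/p) (Or.inl hI.ne')
    convert this using 1
    ring
  have h2i : HasDerivAt (fun r => C * Real.sin r ^ (n-1))
      (C * (((n-1:ℕ):ℝ) * Real.sin x ^ (n-2) * Real.cos x)) x :=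
    ((Real.hasDerivAt_sin x).pow (n-1)).const_mul C
  have h2inv : HasDerivAt (fun r => (C * Real.sin r ^ (n-1))⁻¹)
      (-(C * (((n-1:ℕ):ℝ) * Real.sin x ^ (n-2) * Real.cos x)) / (C * Real.sin x ^ (n-1))^2) x :=
    h2i.inv hCs.ne'
  have h2 := h2inv.pow 2
  have h := h1.mul h2
  have hXI : Ione n ωn α₁ x ^ (1/p)
      = Ione n ωn α₁ x ^ (1/p - 1) * Ione n ωn α₁ x := by
    rw [← Real.rpow_add_one hI.ne']; norm_num
  have hIone : Ione n ωn α₁ x = C * J n x := rfl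
  refine h.congr_deriv ?_
  rw [hXI, hIone]
  simp only [Pi.pow_apply]
  have hsn : Real.sin x ^ (n-1) = Real.sin x ^ (n-2) * Real.sin x := by
    rw [← pow_succ]; congr 1; omega
  have hsx := hsin.ne'
  have hCx := hC.ne'
  have ht : Real.sin x ^ (n-2) ≠ 0 := pow_ne_zero _ hsx
  rw [hsn]
  generalize Real.sin x ^ (n-2) = t at ht ⊢
  field_simp
  have e1 : t * t⁻¹ = 1 := mul_inv_cancel₀ ht
  have e2 : Real.sin x * (Real.sin x)⁻¹ = 1 := mul_inv_cancel₀ hsx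
  have e3 : C * C⁻¹ = 1 := mul_inv_cancel₀ hCx
  linear_combination (-(p * J n x * ((n-1:ℕ):ℝ) * Real.cos x * 2) * (Real.sin x * (Real.sin x)⁻¹) * (C * C⁻¹)) * e1
    + (-(p * J n x * ((n-1:ℕ):ℝ) * Real.cos x * 2) * (C * C⁻¹)) * e2
    + (-(p * J n x * ((n-1:ℕ):ℝ) * Real.cos x * 2)) * e3

include hn hω hα hp hp' in
lemma phi_deriv_nonneg {x : ℝ} (hx : x ∈ Ioo 0 π) :
    0 ≤ (Ione n ωn α₁ x ^ (1/p - 1)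
          * (((n:ℝ) * ωn * α₁ * Real.sin x ^ (n-1))⁻¹)^3 * ((n:ℝ) * ωn * α₁)^2)
        * ((1/p) * (Real.sin x ^ (n-1))^2
            - 2 * ((n-1:ℕ):ℝ) * (Real.sin x ^ (n-2) * Real.cos x * J n x)) := by
  have hC : 0 < (n:ℝ) * ωn * α₁ := hC_pos hn hω hα
  have hsin : 0 < Real.sin x := Real.sin_pos_of_pos_of_lt_pi hx.1 hx.2
  have hs : 0 < Real.sin x ^ (n-1) := pow_pos hsin _
  have hJ : 0 < J n x := J_pos n hx.1 hx.2.le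
  have hI : 0 < Ione n ωn α₁ x := mul_pos hC hJ
  apply mul_nonneg
  · have hX : 0 < Ione n ωn α₁ x ^ (1/p - 1) := Real.rpow_pos_of_pos hI _
    positivity
  · have hkey := key n hn hp hp' hx.1.le hx.2.le
    have h' : 2 * ((n-1:ℕ):ℝ) * (Real.sin x ^ (n-2) * Real.cos x * J n x)
        ≤ (1/p) * (Real.sin x ^ (n-1))^2 := by
      rw [← mul_le_mul_iff_right₀ hp]
      calc p * (2 * ((n-1:ℕ):ℝ) * (Real.sin x ^ (n-2) * Real.cos x * J n x))
          = 2 * p * ((n-1:ℕ):ℝ) * (Real.sin x ^ (n-2) * Real.cos x * J n x) := by ring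
        _ ≤ (Real.sin x ^ (n-1))^2 := hkey
        _ = p * ((1/p) * (Real.sin x ^ (n-1))^2) := by field_simp
    linarith

include hn hω hα hp hp' in
lemma phi_mono : MonotoneOn
    (fun r => Ione n ωn α₁ r ^ (1/p)
      * ((((n:ℝ) * ωn * α₁ * Real.sin r ^ (n-1))⁻¹))^2) (Ico 0 π) := by
  set φ : ℝ → ℝ := fun r => Ione n ωn α₁ r ^ (1/p)
      * ((((n:ℝ) * ωn * α₁ * Real.sin r ^ (n-1))⁻¹))^2 with hφ
  have hC : 0 < (n:ℝ) * ωn * α₁ := hC_pos hn hω hα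
  have hdiff : DifferentiableOn ℝ φ (Ioo 0 π) := fun x hx =>
    (phi_deriv hn hω hα hp hp' hx).differentiableAt.differentiableWithinAt
  have hIoo : MonotoneOn φ (Ioo 0 π) := by
    apply monotoneOn_of_deriv_nonneg (convex_Ioo 0 π) hdiff.continuousOn
    · rw [interior_Ioo]; exact hdiff
    · intro x hx
      rw [interior_Ioo] at hx
      rw [(phi_deriv hn hω hα hp hp' hx).deriv]
      exact phi_deriv_nonneg hn hω hα hp hp' hx
  intro a ha b hb hab
  rcases eq_or_lt_of_le ha.1 with h0 | h0
  · have hφa : φ a = 0 := by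
      rw [hφ]
      simp only [← h0]
      rw [show Ione n ωn α₁ 0 = 0 from Ione_zero,
        Real.zero_rpow (one_div_ne_zero hp.ne'), zero_mul]
    rw [hφa, hφ]
    have hIb : 0 ≤ Ione n ωn α₁ b := mul_nonneg hC.le (J_nonneg n hb.1 hb.2.le)
    exact mul_nonneg (Real.rpow_nonneg hIb _) (sq_nonneg _)
  · exact hIoo ⟨h0, ha.2⟩ ⟨h0.trans_le hab, hb.2⟩ hab

end Phi

/-- For every `n ≥ 2` and `r ∈ [0,π)`: `cos r · ∫₀^r sin^{n-1} ≤ sinⁿ r / n`.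
Consequently, for `0 < p ≤ n/(2n-2)` the function
`k(r) = I₁'(r)² - 2p I₁(r) I₁''(r)` is nonnegative on `[0,π)`, and hence
`l ↦ l^{1/p} G₁(l)⁻²` is nondecreasing on `[0, I₁(π))`. -/
theorem cos_sin_integral_ineq_and_G_monotonicity (n : ℕ) (hn : 2 ≤ n) :
    (∀ r ∈ Set.Ico (0 : ℝ) π,
        Real.cos r * ∫ s in (0 : ℝ)..r, Real.sin s ^ (n - 1) ≤ Real.sin r ^ n / n) ∧
      ∀ ωn α₁ : ℝ, 0 < ωn → 0 < α₁ → ∀ p : ℝ, 0 < p → p ≤ (n : ℝ) / (2 * n - 2) →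
        (∀ r ∈ Set.Ico (0 : ℝ) π,
            0 ≤ deriv (Ione n ωn α₁) r ^ 2
                - 2 * p * Ione n ωn α₁ r * deriv (deriv (Ione n ωn α₁)) r) ∧
          MonotoneOn (fun l : ℝ => l ^ (1 / p) * ((Gone n ωn α₁ l)⁻¹) ^ 2)
            (Set.Ico (0 : ℝ) (Ione n ωn α₁ π)) := by
  constructor
  · intro r hr
    exact part1 n hn hr.1 hr.2.le
  · intro ωn α₁ hω hα p hp hp'
    constructor
    · intro r hr
      have hkey := key n hn hp hp' hr.1 hr.2.le
      rw [deriv2_Ione]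
      simp only [deriv_Ione]
      have hIone : Ione n ωn α₁ r = (n:ℝ) * ωn * α₁ * J n r := rfl
      rw [hIone]
      have h2 : ((n:ℝ) * ωn * α₁ * Real.sin r ^ (n-1))^2
          - 2 * p * ((n:ℝ) * ωn * α₁ * J n r)
            * ((n:ℝ) * ωn * α₁ * (((n-1:ℕ):ℝ) * Real.sin r ^ (n-2) * Real.cos r))
          = ((n:ℝ) * ωn * α₁)^2
            * ((Real.sin r ^ (n-1))^2
              - 2 * p * ((n-1:ℕ):ℝ) * (Real.sin r ^ (n-2) * Real.cos r * J n r)) := by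
        ring
      rw [h2]
      exact mul_nonneg (sq_nonneg _) (sub_nonneg.2 hkey)
    · intro l₁ hl₁ l₂ hl₂ hle
      obtain ⟨hr₁mem, hr₁eq⟩ := IoneInv_spec hn hω hα hl₁
      obtain ⟨hr₂mem, hr₂eq⟩ := IoneInv_spec hn hω hα hl₂
      set r₁ := IoneInv n ωn α₁ l₁ with hr₁def
      set r₂ := IoneInv n ωn α₁ l₂ with hr₂def
      have hr12 : r₁ ≤ r₂ := by
        by_contra hcon
        push_neg at hcon
        have := Ione_strictMono hn hω hα ⟨hr₂mem.1, hr₂mem.2.le⟩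
          ⟨hr₁mem.1, hr₁mem.2.le⟩ hcon
        rw [hr₁eq, hr₂eq] at this
        exact absurd hle (not_le.mpr this)
      have hG1 : Gone n ωn α₁ l₁ = (n:ℝ) * ωn * α₁ * Real.sin r₁ ^ (n-1) := by
        rw [Gone, deriv_Ione]
      have hG2 : Gone n ωn α₁ l₂ = (n:ℝ) * ωn * α₁ * Real.sin r₂ ^ (n-1) := by
        rw [Gone, deriv_Ione]
      simp only
      calc l₁ ^ (1/p) * ((Gone n ωn α₁ l₁)⁻¹)^2
          = Ione n ωn α₁ r₁ ^ (1/p)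
            * ((((n:ℝ) * ωn * α₁ * Real.sin r₁ ^ (n-1))⁻¹))^2 := by
            rw [hG1, ← hr₁eq]
        _ ≤ Ione n ωn α₁ r₂ ^ (1/p)
            * ((((n:ℝ) * ωn * α₁ * Real.sin r₂ ^ (n-1))⁻¹))^2 :=
            phi_mono hn hω hα hp hp' hr₁mem hr₂mem hr12
        _ = l₂ ^ (1/p) * ((Gone n ωn α₁ l₂)⁻¹)^2 := by
            rw [hG2, ← hr₂eq]

end
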